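/- Let μ, σ > 0, γ > 0 with γ ≠ 1, and 0 ≤ λ < μ. Set D = (γ−1)(μ²−λ²)/(γσ⁴) − (1/2 − μ/σ²)², and b = 1/2 − μ/σ² + (γ−1)(μ−λ)/(γσ²). Assume D < 0, set a = sqrt(−D), and assume |b| > a > 0. Then the function w(y) = (a·coth(arcoth(b/a) − a·y) + (μ/σ² − 1/2))/(γ−1) is differentiable and satisfies the Riccati ODE with parameters (μ, σ, γ, λ) at every y such that arcoth(b/a) − a·y has the same (nonzero) sign as arcoth(b/a), and satisfies w(0) = (μ−λ)/(γσ²). -/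

import Mathlib

/-- Hyperbolic cotangent, `coth x = cosh x / sinh x` for `x ≠ 0`. -/
noncomputable def coth (x : ℝ) : ℝ := Real.cosh x / Real.sinh x

/-- Inverse hyperbolic cotangent, defined for `|x| > 1` by
`arcoth x = (1/2) log((x+1)/(x−1))`. -/
noncomputable def arcoth (x : ℝ) : ℝ := (1 / 2) * Real.log ((x + 1) / (x - 1))

lemma coth_hasDerivAt {x : ℝ} (hx : x ≠ 0) : HasDerivAt coth (1 - coth x ^ 2) x := by
  have hs : Real.sinh x ≠ 0 := fun h => hx (Real.sinh_eq_zero.mp h)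
  have h := (Real.hasDerivAt_cosh x).div (Real.hasDerivAt_sinh x) hs
  refine h.congr_deriv ?_
  have := Real.cosh_sq_sub_sinh_sq x
  simp only [coth]
  field_simp

lemma coth_arcoth {x : ℝ} (hx : 1 < |x|) : coth (arcoth x) = x := by
  have hx1 : x - 1 ≠ 0 ∧ x + 1 ≠ 0 ∧ 0 < (x + 1) / (x - 1) := by
    rcases lt_abs.mp hx with h | h
    · refine ⟨by linarith, by linarith, div_pos (by linarith) (by linarith)⟩
    · refine ⟨by linarith, by linarith, div_pos_of_neg_of_neg (by linarith) (by linarith)⟩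
  obtain ⟨h1, h2, hr⟩ := hx1
  set t := arcoth x with ht
  have hE2 : Real.exp t ^ 2 = (x + 1) / (x - 1) := by
    rw [ht, arcoth, ← Real.exp_nat_mul]
    push_cast
    rw [show (2 : ℝ) * (1 / 2 * Real.log ((x + 1) / (x - 1))) = Real.log ((x + 1) / (x - 1)) by ring,
      Real.exp_log hr]
  have hE2' : Real.exp t ^ 2 * (x - 1) = x + 1 := by
    rw [hE2]; field_simp
  have hEpos : 0 < Real.exp t := Real.exp_pos t
  have hE2ne : Real.exp t ^ 2 ≠ 1 := by
    rw [hE2]; intro h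
    have := (div_eq_one_iff_eq h1).mp h; linarith
  have hden : Real.exp t - (Real.exp t)⁻¹ ≠ 0 := by
    intro h
    apply hE2ne
    have h3 : Real.exp t = (Real.exp t)⁻¹ := by linarith
    rw [pow_two]
    nth_rewrite 2 [h3]
    exact mul_inv_cancel₀ hEpos.ne'
  rw [coth, Real.cosh_eq, Real.sinh_eq, Real.exp_neg]
  have hEne : Real.exp t ≠ 0 := hEpos.ne'
  rw [div_eq_iff (by simpa using hden : (Real.exp t - (Real.exp t)⁻¹)/2 ≠ 0)]
  field_simp
  nlinarith [hE2', hEpos]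

lemma riccati_identity (t c K g a : ℝ) (hg : g ≠ 0) (h : a ^ 2 = c ^ 2 - g * K) :
    a * ((1 - t ^ 2) * (-a)) / g + (-g) * ((a * t + c) / g) ^ 2
      + (2 * c) * ((a * t + c) / g) - K = 0 := by
  field_simp
  linear_combination (-1 : ℝ) * h

/-- the hyperbolic-cotangent case of the explicit solution of the
Riccati ODE `w' + (1−γ)w² + (2μ/σ² − 1)w − (μ² − λ²)/(γσ⁴) = 0`
with initial value `w(0) = (μ−λ)/(γσ²)`. -/
theorem riccati_coth_solution (μ σ γ lam : ℝ)
    (hμ : 0 < μ) (hσ : 0 < σ) (hγ : 0 < γ) (hγ1 : γ ≠ 1)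
    (hlam0 : 0 ≤ lam) (hlamμ : lam < μ)
    (D a b : ℝ)
    (hD : D = (γ - 1) * (μ ^ 2 - lam ^ 2) / (γ * σ ^ 4) - (1 / 2 - μ / σ ^ 2) ^ 2)
    (hb : b = 1 / 2 - μ / σ ^ 2 + (γ - 1) * (μ - lam) / (γ * σ ^ 2))
    (hDneg : D < 0)
    (ha : a = Real.sqrt (-D))
    (hba : a < |b|) (hapos : 0 < a)
    (w : ℝ → ℝ)
    (hw : w = fun y => (a * coth (arcoth (b / a) - a * y) + (μ / σ ^ 2 - 1 / 2)) / (γ - 1)) :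
    (∀ y : ℝ, 0 < (arcoth (b / a) - a * y) * arcoth (b / a) →
      DifferentiableAt ℝ w y ∧
      deriv w y + (1 - γ) * (w y) ^ 2 + (2 * μ / σ ^ 2 - 1) * (w y)
        - (μ ^ 2 - lam ^ 2) / (γ * σ ^ 4) = 0) ∧
    w 0 = (μ - lam) / (γ * σ ^ 2) := by
  have hγ1' : γ - 1 ≠ 0 := sub_ne_zero.mpr hγ1
  have hσ2 : (σ : ℝ) ^ 2 ≠ 0 := by positivity
  have hγσ4 : γ * σ ^ 4 ≠ 0 := by positivity
  have ha2 : a ^ 2 = (μ / σ ^ 2 - 1 / 2) ^ 2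
      - (γ - 1) * ((μ ^ 2 - lam ^ 2) / (γ * σ ^ 4)) := by
    rw [ha, Real.sq_sqrt (by linarith : (0:ℝ) ≤ -D), hD]
    ring
  have habs : 1 < |b / a| := by
    rw [abs_div, abs_of_pos hapos]
    exact (one_lt_div hapos).mpr hba
  constructor
  · intro y hy
    set u := arcoth (b / a) - a * y with hudef
    have hu : u ≠ 0 := by
      intro h
      rw [h] at hy
      simp at hy
    have h1 : HasDerivAt (fun y : ℝ => arcoth (b / a) - a * y) (-a) y := by
      simpa using ((hasDerivAt_id y).const_mul a).const_sub (arcoth (b / a))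
    have h2 := (coth_hasDerivAt hu).comp y h1
    have h3 := ((h2.const_mul a).add_const (μ / σ ^ 2 - 1 / 2)).div_const (γ - 1)
    have hder : HasDerivAt w (a * ((1 - coth u ^ 2) * (-a)) / (γ - 1)) y := by
      rw [hw]; exact h3
    refine ⟨hder.differentiableAt, ?_⟩
    rw [hder.deriv, hw]
    simp only
    have key := riccati_identity (coth u) (μ / σ ^ 2 - 1 / 2)
      ((μ ^ 2 - lam ^ 2) / (γ * σ ^ 4)) (γ - 1) a hγ1' ha2
    linear_combination key
  · rw [hw]
    simp only [mul_zero, sub_zero, coth_arcoth habs]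
    rw [mul_div_cancel₀ b hapos.ne', hb]
    field_simp
    ring
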